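/- Let V be a non-singular finite-dimensional quadratic space over Z_p (p odd), and suppose V = U ⊕ ⟨v⟩ is an orthogonal direct sum with v anisotropic. Then the pointwise stabilizer of ⟨v⟩ in O(V) (isometries fixing v) restricted to U is isomorphic to O(U), and the isomorphism preserves the spinor norm: g ∈ O(V) fixing v has square spinor norm on V if and only if its restriction to U has square spinor norm on U. -/

import Mathlib

/-- `g` is the reflection of the quadratic space `(V, B)` with (anisotropic) root `a`. -/
def IsReflectionWithRoot {K V : Type*} [Field K] [AddCommGroup V] [Module K V]
    (B : V →ₗ[K] V →ₗ[K] K) (a : V) (g : V ≃ₗ[K] V) : Prop :=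
  B a a ≠ 0 ∧ ∀ x, g x = x - (2 * B x a * (B a a)⁻¹) • a

/-- `g` is a product of reflections whose roots have norms with square product. -/
def HasSquareSpinorNorm {K V : Type*} [Field K] [AddCommGroup V] [Module K V]
    (B : V →ₗ[K] V →ₗ[K] K) (g : V ≃ₗ[K] V) : Prop :=
  ∃ (k : ℕ) (a : Fin k → V) (r : Fin k → (V ≃ₗ[K] V)),
    (∀ i, IsReflectionWithRoot B (a i) (r i)) ∧
    g = (List.ofFn r).prod ∧ IsSquare (∏ i, B (a i) (a i))

namespace SpinorAux

variable {K : Type*} {V : Type*} [Field K] [AddCommGroup V] [Module K V]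

variable (B : V →ₗ[K] V →ₗ[K] K)

/-- The reflection with root `a`, as a linear map (identity if `a` is isotropic). -/
def reflMap (a : V) : V →ₗ[K] V where
  toFun x := x - (2 * B x a * (B a a)⁻¹) • a
  map_add' x y := by
    simp only [map_add, LinearMap.add_apply]
    module
  map_smul' c x := by
    simp only [map_smul, LinearMap.smul_apply, RingHom.id_apply, smul_eq_mul]
    module

@[simp] lemma reflMap_apply (a x : V) :
    reflMap B a x = x - (2 * B x a * (B a a)⁻¹) • a := rfl

lemma reflMap_involutive (a : V) : Function.Involutive (reflMap B a) := by
  intro x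
  by_cases h : B a a = 0
  · simp [h]
  · simp only [reflMap_apply, map_sub, LinearMap.sub_apply, map_smul, LinearMap.smul_apply,
      smul_eq_mul]
    match_scalars
    · ring
    · field_simp
      ring

/-- The reflection with root `a` (identity if `a` is isotropic). -/
def bRefl (a : V) : V ≃ₗ[K] V :=
  LinearEquiv.ofInvolutive (reflMap B a) (reflMap_involutive B a)

@[simp] lemma bRefl_apply (a x : V) :
    bRefl B a x = x - (2 * B x a * (B a a)⁻¹) • a := rfl

lemma bRefl_mul_self (a : V) : bRefl B a * bRefl B a = 1 :=
  LinearEquiv.ext fun x => reflMap_involutive B a x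

lemma bRefl_inv (a : V) : (bRefl B a)⁻¹ = bRefl B a :=
  inv_eq_of_mul_eq_one_right (bRefl_mul_self B a)

lemma bRefl_isometry (hsymm : ∀ x y, B x y = B y x) (a x y : V) :
    B (bRefl B a x) (bRefl B a y) = B x y := by
  by_cases h : B a a = 0
  · simp [h]
  · simp only [bRefl_apply, map_sub, LinearMap.sub_apply, map_smul, LinearMap.smul_apply,
      smul_eq_mul]
    field_simp
    rw [hsymm a y]
    ring


section Rel

variable (v : V) (U : Submodule K V)

lemma coe_B_v (hU : ∀ x, x ∈ U ↔ B x v = 0) (u : U) : B (u : V) v = 0 :=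
  (hU _).1 u.2

/-- Orthogonal projection onto `U` along `v`. -/
def prjL (hv : B v v ≠ 0) (hU : ∀ x, x ∈ U ↔ B x v = 0) : V →ₗ[K] U where
  toFun x := ⟨x - (B x v * (B v v)⁻¹) • v, (hU _).2 (by
    simp only [map_sub, LinearMap.sub_apply, map_smul, LinearMap.smul_apply, smul_eq_mul]
    field_simp; ring)⟩
  map_add' x y := by
    ext
    simp only [map_add, LinearMap.add_apply, Submodule.coe_add]
    module
  map_smul' c x := by
    ext
    simp only [map_smul, LinearMap.smul_apply, RingHom.id_apply, SetLike.val_smul, smul_eq_mul]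
    module

variable (hv : B v v ≠ 0) (hU : ∀ x, x ∈ U ↔ B x v = 0)

@[simp] lemma prjL_coe_apply (x : V) :
    (prjL B v U hv hU x : V) = x - (B x v * (B v v)⁻¹) • v := rfl

lemma prjL_coe (u : U) : prjL B v U hv hU u = u := by
  ext
  simp [coe_B_v B v U hU u]

lemma prjL_add_smul (x : V) :
    (prjL B v U hv hU x : V) + (B x v * (B v v)⁻¹) • v = x := by
  simp

/-- Extension of an endomorphism of `U` to `V`, fixing `v`. -/
def extL (h : U →ₗ[K] U) : V →ₗ[K] V :=
  U.subtype ∘ₗ h ∘ₗ prjL B v U hv hU + LinearMap.smulRight ((B v v)⁻¹ • B.flip v) v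

lemma extL_apply (h : U →ₗ[K] U) (x : V) :
    extL B v U hv hU h x = (h (prjL B v U hv hU x) : V) + (B x v * (B v v)⁻¹) • v := by
  simp [extL, mul_comm]

lemma B_extL_v (h : U →ₗ[K] U) (x : V) :
    B (extL B v U hv hU h x) v = B x v := by
  rw [extL_apply]
  simp only [map_add, LinearMap.add_apply, map_smul, LinearMap.smul_apply, smul_eq_mul,
    coe_B_v B v U hU]
  field_simp
  ring

lemma prjL_extL (h : U →ₗ[K] U) (x : V) :
    prjL B v U hv hU (extL B v U hv hU h x) = h (prjL B v U hv hU x) := by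
  ext
  rw [prjL_coe_apply, B_extL_v, extL_apply]
  abel

lemma extL_extL (h h' : U →ₗ[K] U) (x : V) :
    extL B v U hv hU h (extL B v U hv hU h' x) = extL B v U hv hU (h ∘ₗ h') x := by
  rw [extL_apply, prjL_extL, B_extL_v, extL_apply]
  rfl

lemma extL_id (x : V) : extL B v U hv hU LinearMap.id x = x := by
  rw [extL_apply]
  simp

/-- Extension of an automorphism of `U` to `V`, fixing `v`. -/
def extE (h : U ≃ₗ[K] U) : V ≃ₗ[K] V :=
  LinearEquiv.ofLinear (extL B v U hv hU h) (extL B v U hv hU h.symm)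
    (by ext x
        simp only [LinearMap.comp_apply, extL_extL, LinearMap.id_apply]
        rw [show ((h : U →ₗ[K] U) ∘ₗ (h.symm : U →ₗ[K] U)) = LinearMap.id by
          ext u; simp, extL_id])
    (by ext x
        simp only [LinearMap.comp_apply, extL_extL, LinearMap.id_apply]
        rw [show ((h.symm : U →ₗ[K] U) ∘ₗ (h : U →ₗ[K] U)) = LinearMap.id by
          ext u; simp, extL_id])

lemma extE_apply (h : U ≃ₗ[K] U) (x : V) :
    extE B v U hv hU h x = (h (prjL B v U hv hU x) : V) + (B x v * (B v v)⁻¹) • v :=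
  extL_apply B v U hv hU _ x

lemma extE_mul (h₁ h₂ : U ≃ₗ[K] U) :
    extE B v U hv hU (h₁ * h₂) = extE B v U hv hU h₁ * extE B v U hv hU h₂ := by
  apply LinearEquiv.ext
  intro x
  show extL B v U hv hU ((h₁ * h₂ : U ≃ₗ[K] U) : U →ₗ[K] U) x
      = extL B v U hv hU (h₁ : U →ₗ[K] U) (extL B v U hv hU (h₂ : U →ₗ[K] U) x)
  rw [extL_extL]
  rfl

lemma extE_one : extE B v U hv hU 1 = 1 := by
  apply LinearEquiv.ext
  intro x
  show extE B v U hv hU 1 x = x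
  rw [extE_apply]
  simp


lemma extE_coe (h : U ≃ₗ[K] U) (u : U) :
    extE B v U hv hU h (u : V) = (h u : V) := by
  rw [extE_apply, prjL_coe, coe_B_v B v U hU]
  simp

lemma extE_v (h : U ≃ₗ[K] U) : extE B v U hv hU h v = v := by
  rw [extE_apply]
  have : prjL B v U hv hU v = 0 := by
    ext; simp [mul_inv_cancel₀ hv]
  rw [this]
  simp [mul_inv_cancel₀ hv]

lemma B_decomp (hsymm : ∀ x y, B x y = B y x) (x y : V) :
    B x y = B (prjL B v U hv hU x : V) (prjL B v U hv hU y : V)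
      + B x v * B y v * (B v v)⁻¹ := by
  simp only [prjL_coe_apply, map_sub, LinearMap.sub_apply, map_smul, LinearMap.smul_apply,
    smul_eq_mul]
  rw [hsymm v y]
  field_simp
  ring

lemma extE_isometry (hsymm : ∀ x y, B x y = B y x) (h : U ≃ₗ[K] U)
    (hh : ∀ x y : U, B ((h x : U) : V) ((h y : U) : V) = B (x : V) (y : V)) (x y : V) :
    B (extE B v U hv hU h x) (extE B v U hv hU h y) = B x y := by
  rw [B_decomp B v U hv hU hsymm (extE B v U hv hU h x) (extE B v U hv hU h y),
    B_decomp B v U hv hU hsymm x y]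
  have hx := prjL_extL B v U hv hU (h : U →ₗ[K] U) x
  have hy := prjL_extL B v U hv hU (h : U →ₗ[K] U) y
  rw [show extE B v U hv hU h x = extL B v U hv hU (h : U →ₗ[K] U) x from rfl,
    show extE B v U hv hU h y = extL B v U hv hU (h : U →ₗ[K] U) y from rfl,
    hx, hy, B_extL_v, B_extL_v]
  rw [show ((h : U →ₗ[K] U) (prjL B v U hv hU x)) = h (prjL B v U hv hU x) from rfl,
    show ((h : U →ₗ[K] U) (prjL B v U hv hU y)) = h (prjL B v U hv hU y) from rfl, hh]

/-- Restriction of an isometry fixing `v` to `U`. -/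
def resE (g : V ≃ₗ[K] V) (hg : ∀ x y, B (g x) (g y) = B x y) (hgv : g v = v) :
    U ≃ₗ[K] U where
  toFun u := ⟨g u, (hU _).2 (by
    conv_lhs => rw [← hgv]
    rw [hg]
    exact coe_B_v B v U hU u)⟩
  invFun u := ⟨g.symm u, (hU _).2 (by
    have h2 := hg (g.symm u) v
    rw [g.apply_symm_apply, hgv] at h2
    rw [← h2]
    exact coe_B_v B v U hU u)⟩
  map_add' x y := by ext; simp
  map_smul' c x := by ext; simp
  left_inv u := by ext; simp
  right_inv u := by ext; simp

@[simp] lemma resE_coe (g : V ≃ₗ[K] V) (hg : ∀ x y, B (g x) (g y) = B x y) (hgv : g v = v)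
    (u : U) : (resE B v U hU g hg hgv u : V) = g u := rfl

lemma extE_resE (g : V ≃ₗ[K] V) (hg : ∀ x y, B (g x) (g y) = B x y) (hgv : g v = v) :
    extE B v U hv hU (resE B v U hU g hg hgv) = g := by
  apply LinearEquiv.ext
  intro x
  rw [extE_apply, resE_coe]
  conv_rhs => rw [← prjL_add_smul B v U hv hU x]
  rw [map_add, map_smul, hgv]

lemma resE_mul (g₁ g₂ : V ≃ₗ[K] V) (hg₁ hg₂) (hgv₁ : g₁ v = v) (hgv₂ : g₂ v = v)
    (hg₁₂) (hgv₁₂ : (g₁ * g₂) v = v) :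
    resE B v U hU (g₁ * g₂) hg₁₂ hgv₁₂
      = resE B v U hU g₁ hg₁ hgv₁ * resE B v U hU g₂ hg₂ hgv₂ := by
  apply LinearEquiv.ext
  intro u
  ext
  rfl

lemma extE_bRefl (hsymm : ∀ x y, B x y = B y x) (a : U) :
    extE B v U hv hU (bRefl (LinearMap.BilinForm.restrict B U) a) = bRefl B (a : V) := by
  apply LinearEquiv.ext
  intro x
  rw [extE_apply]
  have h2 : B (prjL B v U hv hU x : V) (a : V) = B x (a : V) := by
    rw [prjL_coe_apply, map_sub, LinearMap.sub_apply, map_smul, LinearMap.smul_apply]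
    rw [hsymm v (a : V), coe_B_v B v U hU a]
    simp
  simp only [bRefl_apply, LinearMap.BilinForm.restrict_apply, LinearMap.domRestrict_apply,
    Submodule.coe_sub, SetLike.val_smul, h2]
  have h3 := prjL_add_smul B v U hv hU x
  rw [show (prjL B v U hv hU x : V) - (2 * B x (a : V) * (B (a : V) (a : V))⁻¹) • (a : V)
        + (B x v * (B v v)⁻¹) • v
      = ((prjL B v U hv hU x : V) + (B x v * (B v v)⁻¹) • v)
        - (2 * B x (a : V) * (B (a : V) (a : V))⁻¹) • (a : V) from by abel, h3]

lemma extE_bReflList (hsymm : ∀ x y, B x y = B y x) (L : List U) :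
    extE B v U hv hU ((L.map (fun u => bRefl (LinearMap.BilinForm.restrict B U) u)).prod)
      = ((L.map (fun u : U => (u : V))).map (fun a => bRefl B a)).prod := by
  induction L with
  | nil => simpa using extE_one B v U hv hU
  | cons a L ih =>
      simp only [List.map_cons, List.prod_cons]
      rw [extE_mul, ih, extE_bRefl B v U hv hU hsymm a]

end Rel


section Clifford

open CliffordAlgebra

variable (B : V →ₗ[K] V →ₗ[K] K)

/-- The quadratic form of `B`. -/
def QB : QuadraticForm K V := LinearMap.BilinMap.toQuadraticMap B

@[simp] lemma QB_apply (x : V) : QB B x = B x x := rfl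

lemma polar_QB (hsymm : ∀ x y, B x y = B y x) (x y : V) :
    QuadraticMap.polar (QB B) x y = 2 * B x y := by
  rw [QB, LinearMap.BilinMap.polar_toQuadraticMap, hsymm y x]
  ring

lemma contract_mul (Q : QuadraticForm K V) (d : Module.Dual K V)
    (x y : CliffordAlgebra Q) :
    contractLeft d (x * y) = contractLeft d x * y + involute x * contractLeft d y := by
  induction x using CliffordAlgebra.induction generalizing y with
  | algebraMap r =>
      simp [contractLeft_algebraMap_mul, contractLeft_algebraMap, Algebra.smul_def]
  | ι m =>
      rw [contractLeft_ι_mul, contractLeft_ι, involute_ι, Algebra.smul_def, neg_mul, sub_eq_add_neg]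
  | mul a b iha ihb =>
      rw [mul_assoc, iha, ihb, iha, map_mul]
      noncomm_ring
  | add a b iha ihb =>
      rw [add_mul, map_add, iha, ihb, map_add, map_add]
      noncomm_ring

lemma phi_eq (Q : QuadraticForm K V) (w : V) (x : CliffordAlgebra Q) :
    ι Q w * x - involute x * ι Q w
      = contractLeft (QuadraticMap.polarBilin Q w) x := by
  induction x using CliffordAlgebra.induction with
  | algebraMap r =>
      rw [contractLeft_algebraMap, AlgHom.commutes, Algebra.commutes, sub_self]
  | ι m =>
      rw [involute_ι, contractLeft_ι, neg_mul, sub_neg_eq_add, ι_mul_ι_add_swap,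
        QuadraticMap.polarBilin_apply_apply]
  | mul a b iha ihb =>
      rw [contract_mul, ← iha, ← ihb, map_mul]
      noncomm_ring
  | add a b iha ihb =>
      simp only [map_add, mul_add, add_mul]
      rw [← iha, ← ihb]
      abel

lemma iota_mul_iota (hsymm : ∀ x y, B x y = B y x) (a x : V) (ha : B a a ≠ 0) :
    ι (QB B) a * ι (QB B) x = -(ι (QB B) (bRefl B a x)) * ι (QB B) a := by
  have swap := ι_mul_ι_add_swap (Q := QB B) a x
  rw [bRefl_apply, map_sub, map_smul, neg_sub, sub_mul, smul_mul_assoc, ι_sq_scalar, QB_apply]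
  have hc : (2 * B x a * (B a a)⁻¹) • (algebraMap K (CliffordAlgebra (QB B)) (B a a))
      = algebraMap K _ (2 * B x a) := by
    rw [Algebra.smul_def, ← map_mul, mul_assoc, inv_mul_cancel₀ ha, mul_one]
  rw [hc]
  have hpolar : QuadraticMap.polar (QB B) a x = 2 * B x a := by
    rw [polar_QB B hsymm, hsymm a x]
  rw [hpolar] at swap
  rw [← swap]
  abel

lemma prod_iota_comm (hsymm : ∀ x y, B x y = B y x) (L : List V)
    (hL : ∀ a ∈ L, B a a ≠ 0) (x : V) :
    (L.map (ι (QB B))).prod * ι (QB B) x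
      = ((-1 : K) ^ L.length) •
        (ι (QB B) ((L.map (bRefl B)).prod x) * (L.map (ι (QB B))).prod) := by
  induction L with
  | nil => simp
  | cons a L ih =>
      simp only [List.map_cons, List.prod_cons, List.length_cons]
      rw [mul_assoc, ih (fun b hb => hL b (List.mem_cons_of_mem a hb)), mul_smul_comm,
        ← mul_assoc, iota_mul_iota B hsymm a _ (hL a List.mem_cons_self),
        show (bRefl B a * (List.map (bRefl B) L).prod) x
          = bRefl B a ((List.map (bRefl B) L).prod x) from rfl,
        pow_succ, neg_mul, neg_mul, mul_assoc]
      module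

lemma reverse_prod_mul (L : List V) :
    reverse (Q := QB B) ((L.map (ι (QB B))).prod) * (L.map (ι (QB B))).prod
      = algebraMap K _ ((L.map (fun a => B a a)).prod) := by
  induction L with
  | nil => simp
  | cons a L ih =>
      simp only [List.map_cons, List.prod_cons]
      rw [reverse.map_mul, reverse_ι, mul_assoc, ← mul_assoc (ι (QB B) a), ι_sq_scalar, QB_apply,
        ← Algebra.smul_def, mul_smul_comm, ih, Algebra.smul_def, ← map_mul]

lemma involute_prod (L : List V) :
    involute (Q := QB B) ((L.map (ι (QB B))).prod)
      = ((-1 : K) ^ L.length) • (L.map (ι (QB B))).prod := by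
  induction L with
  | nil => simp
  | cons a L ih =>
      simp only [List.map_cons, List.prod_cons, List.length_cons]
      rw [map_mul, involute_ι, ih, pow_succ, mul_smul_comm, neg_mul]
      module


lemma mem_adjoin_comm (hsymm : ∀ x y, B x y = B y x) (e : V) (s : Set V)
    (hs : ∀ x ∈ s, B e x = 0) (a : CliffordAlgebra (QB B))
    (ha : a ∈ Algebra.adjoin K (ι (QB B) '' s)) :
    ι (QB B) e * a = involute a * ι (QB B) e := by
  induction ha using Algebra.adjoin_induction with
  | mem x hx =>
      obtain ⟨m, hm, rfl⟩ := hx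
      have swap := ι_mul_ι_add_swap (Q := QB B) e m
      have hp : QuadraticMap.polar (QB B) e m = 0 := by
        rw [polar_QB B hsymm, hs m hm, mul_zero]
      rw [hp, map_zero] at swap
      rw [involute_ι, eq_neg_of_add_eq_zero_left swap, neg_mul]
  | algebraMap r =>
      rw [AlgHom.commutes, Algebra.commutes]
  | add x y hx hy ihx ihy =>
      rw [map_add, mul_add, add_mul, ihx, ihy]
  | mul x y hx hy ihx ihy =>
      rw [← mul_assoc, ihx, mul_assoc, ihy, ← mul_assoc, map_mul]

lemma mem_adjoin_involute (s : Set V) (a : CliffordAlgebra (QB B))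
    (ha : a ∈ Algebra.adjoin K (ι (QB B) '' s)) :
    involute a ∈ Algebra.adjoin K (ι (QB B) '' s) := by
  induction ha using Algebra.adjoin_induction with
  | mem x hx =>
      obtain ⟨m, hm, rfl⟩ := hx
      rw [involute_ι]
      exact neg_mem (Algebra.subset_adjoin ⟨m, hm, rfl⟩)
  | algebraMap r =>
      rw [AlgHom.commutes (involute (Q := QB B)) r]
      exact Subalgebra.algebraMap_mem _ r
  | add x y hx hy ihx ihy => rw [map_add]; exact add_mem ihx ihy
  | mul x y hx hy ihx ihy => rw [map_mul]; exact mul_mem ihx ihy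

lemma mem_adjoin_contract (hsymm : ∀ x y, B x y = B y x) (e : V) (s : Set V)
    (hs : ∀ x ∈ s, B e x = 0) (a : CliffordAlgebra (QB B))
    (ha : a ∈ Algebra.adjoin K (ι (QB B) '' s)) :
    contractLeft (QuadraticMap.polarBilin (QB B) e) a = 0 := by
  induction ha using Algebra.adjoin_induction with
  | mem x hx =>
      obtain ⟨m, hm, rfl⟩ := hx
      rw [contractLeft_ι, QuadraticMap.polarBilin_apply_apply, polar_QB B hsymm, hs m hm,
        mul_zero, map_zero]
  | algebraMap r => rw [contractLeft_algebraMap]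
  | add x y hx hy ihx ihy => rw [map_add, ihx, ihy, add_zero]
  | mul x y hx hy ihx ihy => rw [contract_mul, ihx, ihy, zero_mul, mul_zero, add_zero]

lemma adjoin_cons_decomp (hsymm : ∀ x y, B x y = B y x) (e : V) (s : Set V)
    (hs : ∀ x ∈ s, B e x = 0) (a : CliffordAlgebra (QB B))
    (ha : a ∈ Algebra.adjoin K (ι (QB B) '' insert e s)) :
    ∃ x ∈ Algebra.adjoin K (ι (QB B) '' s), ∃ y ∈ Algebra.adjoin K (ι (QB B) '' s),
      a = x + ι (QB B) e * y := by
  induction ha using Algebra.adjoin_induction with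
  | mem z hz =>
      obtain ⟨m, hm, rfl⟩ := hz
      rcases Set.mem_insert_iff.mp hm with rfl | hm'
      · exact ⟨0, zero_mem _, 1, one_mem _, by rw [mul_one, zero_add]⟩
      · exact ⟨ι (QB B) m, Algebra.subset_adjoin ⟨m, hm', rfl⟩, 0, zero_mem _, by
          rw [mul_zero, add_zero]⟩
  | algebraMap r =>
      exact ⟨algebraMap K _ r, Subalgebra.algebraMap_mem _ r, 0, zero_mem _, by
        rw [mul_zero, add_zero]⟩
  | add x y hx hy ihx ihy =>
      obtain ⟨x₁, hx₁, y₁, hy₁, rfl⟩ := ihx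
      obtain ⟨x₂, hx₂, y₂, hy₂, rfl⟩ := ihy
      exact ⟨x₁ + x₂, add_mem hx₁ hx₂, y₁ + y₂, add_mem hy₁ hy₂, by
        rw [mul_add]; abel⟩
  | mul x y hx hy ihx ihy =>
      obtain ⟨x₁, hx₁, y₁, hy₁, rfl⟩ := ihx
      obtain ⟨x₂, hx₂, y₂, hy₂, rfl⟩ := ihy
      refine ⟨x₁ * x₂ + algebraMap K _ (B e e) * (involute y₁ * y₂),
        add_mem (mul_mem hx₁ hx₂) (mul_mem (Subalgebra.algebraMap_mem _ _)
          (mul_mem (mem_adjoin_involute B s y₁ hy₁) hy₂)),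
        involute x₁ * y₂ + y₁ * x₂,
        add_mem (mul_mem (mem_adjoin_involute B s x₁ hx₁) hy₂) (mul_mem hy₁ hx₂), ?_⟩
      have hiy : ∀ z ∈ Algebra.adjoin K (ι (QB B) '' s),
          z * ι (QB B) e = ι (QB B) e * involute z := by
        intro z hz
        have := mem_adjoin_comm B hsymm e s hs (involute z)
          (mem_adjoin_involute B s z hz)
        rw [involute_involute] at this
        rw [this]
      have h1 : x₁ * (ι (QB B) e * y₂) = ι (QB B) e * (involute x₁ * y₂) := by
        rw [← mul_assoc, hiy x₁ hx₁, mul_assoc]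
      have h3 : (ι (QB B) e * y₁) * (ι (QB B) e * y₂)
          = algebraMap K _ (B e e) * (involute y₁ * y₂) := by
        rw [← mul_assoc, mul_assoc (ι (QB B) e) y₁ (ι (QB B) e), hiy y₁ hy₁, ← mul_assoc,
          ι_sq_scalar, QB_apply, mul_assoc]
      have h2 : (ι (QB B) e * y₁) * x₂ = ι (QB B) e * (y₁ * x₂) := mul_assoc _ _ _
      rw [add_mul, mul_add, mul_add, h1, h2, h3, mul_add (ι (QB B) e)]
      abel

lemma aux_scalar (htwo : (2 : K) ≠ 0) (hsymm : ∀ x y, B x y = B y x) (l : List V) :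
    ∀ (_ : ∀ a ∈ l, B a a ≠ 0) (_ : l.Pairwise fun a b => B a b = 0)
      (α : CliffordAlgebra (QB B))
      (_ : α ∈ Algebra.adjoin K (ι (QB B) '' {x | x ∈ l}))
      (_ : ∀ w : V, contractLeft (QuadraticMap.polarBilin (QB B) w) α = 0),
      ∃ c : K, α = algebraMap K _ c := by
  induction l with
  | nil =>
      intro hl1 hl2 α hmem hc
      rw [show {x : V | x ∈ ([] : List V)} = (∅ : Set V) from by ext x; simp,
        Set.image_empty, Algebra.adjoin_empty, Algebra.mem_bot] at hmem
      obtain ⟨c, hc'⟩ := hmem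
      exact ⟨c, hc'.symm⟩
  | cons e l ih =>
      intro hl1 hl2 α hmem hc
      rw [show {x : V | x ∈ e :: l} = insert e {x | x ∈ l} from Set.ext fun x => List.mem_cons]
        at hmem
      have hpe := List.pairwise_cons.mp hl2
      have hse : ∀ x ∈ {x : V | x ∈ l}, B e x = 0 := fun x hx => hpe.1 x hx
      obtain ⟨x, hx, y, hy, rfl⟩ := adjoin_cons_decomp B hsymm e _ hse α hmem
      have hce := hc e
      rw [map_add, mem_adjoin_contract B hsymm e _ hse x hx, contractLeft_ι_mul,
        mem_adjoin_contract B hsymm e _ hse y hy, mul_zero, sub_zero, zero_add] at hce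
      have hde : QuadraticMap.polarBilin (QB B) e e = 2 * B e e := by
        rw [QuadraticMap.polarBilin_apply_apply, polar_QB B hsymm]
      rw [hde] at hce
      have hy0 : y = 0 := by
        rcases smul_eq_zero.mp hce with h | h
        · exact absurd h (mul_ne_zero htwo (hl1 e List.mem_cons_self))
        · exact h
      subst hy0
      rw [mul_zero, add_zero] at hc ⊢
      exact ih (fun a haa => hl1 a (List.mem_cons_of_mem e haa)) hpe.2 x hx hc

lemma exists_scalar [FiniteDimensional K V] (htwo : (2 : K) ≠ 0)
    (hsymm : ∀ x y, B x y = B y x) (hnd : ∀ x, (∀ y, B x y = 0) → x = 0)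
    (α : CliffordAlgebra (QB B))
    (hα : ∀ w : V, contractLeft (QuadraticMap.polarBilin (QB B) w) α = 0) :
    ∃ c : K, α = algebraMap K _ c := by
  letI : Invertible (2 : K) := invertibleOfNonzero htwo
  have hBsymm : B.IsSymm := ⟨fun x y => hsymm x y⟩
  obtain ⟨bas, hortho⟩ := LinearMap.BilinForm.exists_orthogonal_basis hBsymm
  have hani : ∀ i, B (bas i) (bas i) ≠ 0 := by
    intro i hBi
    apply bas.ne_zero i
    apply hnd
    intro y
    rw [← Module.Basis.sum_repr bas y, map_sum]
    apply Finset.sum_eq_zero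
    intro j _
    rw [map_smul, smul_eq_mul]
    rcases eq_or_ne j i with rfl | hne
    · rw [hBi, mul_zero]
    · rw [LinearMap.isOrthoᵢ_def.mp hortho i j (Ne.symm hne), mul_zero]
  have hmemall : ∀ β : CliffordAlgebra (QB B),
      β ∈ Algebra.adjoin K (ι (QB B) '' {x | x ∈ List.ofFn bas}) := by
    intro β
    induction β using CliffordAlgebra.induction with
    | algebraMap r => exact Subalgebra.algebraMap_mem _ r
    | ι m =>
        have hm : ι (QB B) m = ∑ i, bas.repr m i • ι (QB B) (bas i) := by
          conv_lhs => rw [← Module.Basis.sum_repr bas m]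
          rw [map_sum]
          simp [map_smul]
        rw [hm]
        refine Subalgebra.sum_mem _ fun i _ => Subalgebra.smul_mem _
          (Algebra.subset_adjoin ?_) _
        exact ⟨bas i, by simp [List.mem_ofFn], rfl⟩
    | add a b iha ihb => exact add_mem iha ihb
    | mul a b iha ihb => exact mul_mem iha ihb
  exact aux_scalar B htwo hsymm (List.ofFn bas)
    (fun a haa => by
      obtain ⟨i, rfl⟩ := List.mem_ofFn.mp haa
      exact hani i)
    (List.pairwise_ofFn.mpr fun i j hij => LinearMap.isOrthoᵢ_def.mp hortho i j (ne_of_lt hij))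
    α (hmemall α) hα

theorem spinor_norm_wd [FiniteDimensional K V] (htwo : (2 : K) ≠ 0)
    (hsymm : ∀ x y, B x y = B y x) (hnd : ∀ x, (∀ y, B x y = 0) → x = 0)
    (L : List V) (hL : ∀ a ∈ L, B a a ≠ 0)
    (hprod : (L.map (bRefl B)).prod = 1) :
    IsSquare ((L.map fun a => B a a).prod) := by
  letI : Invertible (2 : K) := invertibleOfNonzero htwo
  set α := (L.map (ι (QB B))).prod with hα
  have hcomm : ∀ x : V, α * ι (QB B) x = ((-1 : K) ^ L.length) • (ι (QB B) x * α) := by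
    intro x
    have h := prod_iota_comm B hsymm L hL x
    rw [hprod] at h
    exact h
  have hinv : involute α = ((-1 : K) ^ L.length) • α := involute_prod B L
  have hphi : ∀ w : V, contractLeft (QuadraticMap.polarBilin (QB B) w) α = 0 := by
    intro w
    rw [← phi_eq, hinv, smul_mul_assoc, hcomm w, smul_smul, ← pow_add,
      Even.neg_one_pow ⟨L.length, rfl⟩, one_smul, sub_self]
  obtain ⟨c, hcα⟩ := exists_scalar B htwo hsymm hnd α hphi
  have hrev := reverse_prod_mul B L
  rw [← hα, hcα, reverse.commutes, ← map_mul] at hrev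
  haveI : Nontrivial (CliffordAlgebra (QB B)) := inferInstance
  exact ⟨c, ((algebraMap K (CliffordAlgebra (QB B))).injective hrev).symm⟩

end Clifford

universe u

theorem cartanDieudonne {K : Type*} [Field K] (htwo : (2 : K) ≠ 0) (n : ℕ) :
    ∀ (V : Type u) [AddCommGroup V] [Module K V] [FiniteDimensional K V]
      (B : V →ₗ[K] V →ₗ[K] K), (∀ x y, B x y = B y x) → (∀ x, (∀ y, B x y = 0) → x = 0) →
      Module.finrank K V ≤ n → ∀ g : V ≃ₗ[K] V, (∀ x y, B (g x) (g y) = B x y) →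
      ∃ L : List V, (∀ a ∈ L, B a a ≠ 0) ∧ g = (L.map (bRefl B)).prod := by
  induction n with
  | zero =>
      intro V _ _ _ B hsymm hnd hrank g hg
      have h0 : Module.finrank K V = 0 := Nat.le_zero.mp hrank
      have hsub : Subsingleton V := Module.finrank_zero_iff.mp h0
      refine ⟨[], by simp, ?_⟩
      apply LinearEquiv.ext
      intro x
      exact Subsingleton.elim _ _
  | succ n ih =>
      intro V _ _ _ B hsymm hnd hrank g hg
      have mulapp : ∀ (e₁ e₂ : V ≃ₗ[K] V) (x : V), (e₁ * e₂) x = e₁ (e₂ x) := fun _ _ _ => rfl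
      by_cases htriv : ∀ x : V, B x x = 0
      · have hzero : ∀ x : V, x = 0 := by
          intro x
          apply hnd
          intro y
          have h1 := htriv (x + y)
          simp only [map_add, LinearMap.add_apply] at h1
          have h4 : 2 * B x y = 0 := by
            linear_combination h1 - htriv x - htriv y - hsymm y x
          rcases mul_eq_zero.mp h4 with h | h
          · exact absurd h htwo
          · exact h
        refine ⟨[], by simp, ?_⟩
        apply LinearEquiv.ext
        intro x
        rw [hzero x, hzero (g 0)]
        simp
      · push_neg at htriv
        obtain ⟨v₀, hv₀⟩ := htriv
        have hww : B (g v₀) (g v₀) = B v₀ v₀ := hg v₀ v₀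
        have key : ∃ (P : List V) (g₁ : V ≃ₗ[K] V), (∀ a ∈ P, B a a ≠ 0) ∧
            (∀ x y, B (g₁ x) (g₁ y) = B x y) ∧ g₁ v₀ = v₀ ∧
            g = (P.map (bRefl B)).prod * g₁ := by
          by_cases ha : B (v₀ - g v₀) (v₀ - g v₀) = 0
          · -- use b = v₀ + g v₀ and v₀
            have hb : B (v₀ + g v₀) (v₀ + g v₀) = (2 * 2) * B v₀ v₀ := by
              simp only [map_add, map_sub, LinearMap.add_apply, LinearMap.sub_apply] at ha ⊢
              linear_combination -ha + 2 * hww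
            have hbne : B (v₀ + g v₀) (v₀ + g v₀) ≠ 0 := by
              rw [hb]
              exact mul_ne_zero (mul_ne_zero htwo htwo) hv₀
            have hfix1 : bRefl B (v₀ + g v₀) (g v₀) = -v₀ := by
              have hco : 2 * B (g v₀) (v₀ + g v₀) = B (v₀ + g v₀) (v₀ + g v₀) := by
                simp only [map_add, LinearMap.add_apply]
                linear_combination hww + hsymm (g v₀) v₀
              rw [bRefl_apply, hco, mul_inv_cancel₀ hbne, one_smul]
              abel
            have hfix2 : bRefl B v₀ (-v₀) = v₀ := by
              have hco : 2 * B (-v₀) v₀ * (B v₀ v₀)⁻¹ = -2 := by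
                rw [map_neg, LinearMap.neg_apply]
                field_simp
              rw [bRefl_apply, hco]
              module
            refine ⟨[v₀ + g v₀, v₀], bRefl B v₀ * (bRefl B (v₀ + g v₀) * g), ?_, ?_, ?_, ?_⟩
            · intro a haP
              simp only [List.mem_cons, List.not_mem_nil, or_false] at haP
              rcases haP with rfl | rfl
              · exact hbne
              · exact hv₀
            · intro x y
              simp only [mulapp]
              rw [bRefl_isometry B hsymm, bRefl_isometry B hsymm, hg]
            · simp only [mulapp]
              rw [hfix1, hfix2]
            · simp only [List.map_cons, List.map_nil, List.prod_cons, List.prod_nil, mul_one]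
              rw [← mul_assoc, ← mul_assoc]
              rw [show bRefl B (v₀ + g v₀) * bRefl B v₀ * bRefl B v₀ * bRefl B (v₀ + g v₀)
                    = bRefl B (v₀ + g v₀) * (bRefl B v₀ * bRefl B v₀) * bRefl B (v₀ + g v₀) by
                  noncomm_ring]
              rw [bRefl_mul_self, mul_one, bRefl_mul_self, one_mul]
          · -- use a = v₀ - g v₀
            have hfix1 : bRefl B (v₀ - g v₀) (g v₀) = v₀ := by
              have hco : 2 * B (g v₀) (v₀ - g v₀) = -(B (v₀ - g v₀) (v₀ - g v₀)) := by
                simp only [map_sub, LinearMap.sub_apply]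
                linear_combination hsymm (g v₀) v₀ - hww
              rw [bRefl_apply, hco, neg_mul, mul_inv_cancel₀ ha, neg_smul, one_smul,
                sub_neg_eq_add]
              abel
            refine ⟨[v₀ - g v₀], bRefl B (v₀ - g v₀) * g, ?_, ?_, ?_, ?_⟩
            · intro a haP
              simp only [List.mem_cons, List.not_mem_nil, or_false] at haP
              rcases haP with rfl
              exact ha
            · intro x y
              simp only [mulapp]
              rw [bRefl_isometry B hsymm, hg]
            · simp only [mulapp]
              rw [hfix1]
            · simp only [List.map_cons, List.map_nil, List.prod_cons, List.prod_nil, mul_one]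
              rw [← mul_assoc, bRefl_mul_self, one_mul]
        obtain ⟨P, g₁, hP, hg₁, hg₁v, hfact⟩ := key
        set Uv := LinearMap.ker (B.flip v₀) with hUvdef
        have hUv : ∀ x, x ∈ Uv ↔ B x v₀ = 0 := by
          intro x
          simp [hUvdef, LinearMap.mem_ker]
        set B' := LinearMap.BilinForm.restrict B Uv with hB'def
        have hB'app : ∀ x y : Uv, B' x y = B (x : V) (y : V) := fun x y => rfl
        have hsymm' : ∀ x y : Uv, B' x y = B' y x := fun x y => hsymm _ _
        have hnd' : ∀ x : Uv, (∀ y : Uv, B' x y = 0) → x = 0 := by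
          intro x hx
          have hxV : ∀ y : V, B (x : V) y = 0 := by
            intro y
            rw [B_decomp B v₀ Uv hv₀ hUv hsymm (x : V) y, prjL_coe, coe_B_v B v₀ Uv hUv x]
            have := hx (prjL B v₀ Uv hv₀ hUv y)
            rw [hB'app] at this
            rw [this]
            ring
          exact Subtype.ext (hnd _ hxV)
        have hrank' : Module.finrank K ↥Uv ≤ n := by
          have hlt : Uv < ⊤ := by
            rw [lt_top_iff_ne_top]
            intro hUtop
            have : v₀ ∈ Uv := hUtop ▸ Submodule.mem_top
            exact hv₀ ((hUv v₀).1 this)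
          have := Submodule.finrank_lt (K := K) (V := V) hlt.ne
          omega
        have hh₁ : ∀ x y : Uv,
            B ((resE B v₀ Uv hUv g₁ hg₁ hg₁v x : Uv) : V) ((resE B v₀ Uv hUv g₁ hg₁ hg₁v y : Uv) : V)
              = B (x : V) (y : V) := by
          intro x y
          rw [resE_coe, resE_coe, hg₁]
        obtain ⟨L', hL', hgL'⟩ := ih ↥Uv B' hsymm' hnd' hrank'
          (resE B v₀ Uv hUv g₁ hg₁ hg₁v) (fun x y => by simp only [hB'app]; exact hh₁ x y)
        refine ⟨P ++ L'.map (fun u : ↥Uv => (u : V)), ?_, ?_⟩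
        · intro a haa
          rcases List.mem_append.mp haa with h | h
          · exact hP a h
          · obtain ⟨u, hu, rfl⟩ := List.mem_map.mp h
            have := hL' u hu
            rwa [hB'app] at this
        · have hext : g₁ = extE B v₀ Uv hv₀ hUv (resE B v₀ Uv hUv g₁ hg₁ hg₁v) :=
            (extE_resE B v₀ Uv hv₀ hUv g₁ hg₁ hg₁v).symm
          rw [hfact, hext, hgL', extE_bReflList B v₀ Uv hv₀ hUv hsymm L',
            List.map_append, List.prod_append]

end SpinorAux

namespace SpinorAux2

open SpinorAux

variable {K : Type*} {V : Type*} [Field K] [AddCommGroup V] [Module K V]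

lemma isReflection_iff (B : V →ₗ[K] V →ₗ[K] K) (a : V) (g : V ≃ₗ[K] V) :
    IsReflectionWithRoot B a g ↔ B a a ≠ 0 ∧ g = bRefl B a := by
  constructor
  · rintro ⟨h1, h2⟩
    exact ⟨h1, LinearEquiv.ext fun x => by rw [h2 x, bRefl_apply]⟩
  · rintro ⟨h1, rfl⟩
    exact ⟨h1, fun x => rfl⟩

lemma hssn_iff (B : V →ₗ[K] V →ₗ[K] K) (g : V ≃ₗ[K] V) :
    HasSquareSpinorNorm B g ↔ ∃ L : List V, (∀ a ∈ L, B a a ≠ 0) ∧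
      g = (L.map (bRefl B)).prod ∧ IsSquare ((L.map fun a => B a a).prod) := by
  constructor
  · rintro ⟨k, a, r, h1, h2, h3⟩
    refine ⟨List.ofFn a, ?_, ?_, ?_⟩
    · intro b hb
      obtain ⟨i, rfl⟩ := List.mem_ofFn.mp hb
      exact (h1 i).1
    · rw [h2, List.map_ofFn]
      exact congrArg List.prod
        (congrArg List.ofFn (funext fun i => ((isReflection_iff B (a i) (r i)).mp (h1 i)).2))
    · rw [List.map_ofFn, List.prod_ofFn]
      exact h3
  · rintro ⟨L, h1, h2, h3⟩
    refine ⟨L.length, L.get, fun i => bRefl B (L.get i),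
      fun i => ⟨h1 _ (List.get_mem L i), fun x => rfl⟩, ?_, ?_⟩
    · rw [h2]
      conv_lhs => rw [← List.ofFn_get L]
      rw [List.map_ofFn]
      rfl
    · have heq : (L.map fun a => B a a).prod = ∏ i, B (L.get i) (L.get i) := by
        conv_lhs => rw [← List.ofFn_get L]
        rw [List.map_ofFn, List.prod_ofFn]
        rfl
      rwa [heq] at h3

lemma prod_bRefl_inv (B : V →ₗ[K] V →ₗ[K] K) (M : List V) :
    ((M.map (bRefl B)).prod)⁻¹ = (M.reverse.map (bRefl B)).prod := by
  induction M with
  | nil => simp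
  | cons a M ih =>
      simp only [List.map_cons, List.prod_cons, List.reverse_cons, List.map_append,
        List.prod_append, List.map_nil, List.prod_nil, mul_one]
      rw [mul_inv_rev, ih, bRefl_inv]

end SpinorAux2

/-- If `V = U ⊕ ⟨v⟩` is an orthogonal splitting of a non-singular space with `v`
anisotropic, then the pointwise stabilizer of `⟨v⟩` in `O(V)` restricts isomorphically
onto `O(U)`, and the isomorphism preserves having square spinor norm. -/
theorem stabilizer_restricts_to_OU (p : ℕ) [hp : Fact p.Prime] (hodd : p ≠ 2)
    (V : Type*) [AddCommGroup V] [Module (ZMod p) V] [FiniteDimensional (ZMod p) V]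
    (B : V →ₗ[ZMod p] V →ₗ[ZMod p] ZMod p) (hsymm : ∀ x y, B x y = B y x)
    (hnd : ∀ x, (∀ y, B x y = 0) → x = 0)
    (U : Submodule (ZMod p) V) (v : V) (hv : B v v ≠ 0)
    (horth : ∀ u ∈ U, B u v = 0)
    (hsup : U ⊔ Submodule.span (ZMod p) {v} = ⊤)
    (hinf : U ⊓ Submodule.span (ZMod p) {v} = ⊥)
    (S : Subgroup (V ≃ₗ[ZMod p] V))
    (hS : ∀ g, g ∈ S ↔ ((∀ x y, B (g x) (g y) = B x y) ∧ g v = v))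
    (OU : Subgroup (U ≃ₗ[ZMod p] U))
    (hOU : ∀ h, h ∈ OU ↔ ∀ x y : U, B ((h x : U) : V) ((h y : U) : V) = B (x : V) (y : V)) :
    ∃ e : S ≃* OU,
      (∀ (g : S) (x : U), (((e g : U ≃ₗ[ZMod p] U) x : U) : V) = (g : V ≃ₗ[ZMod p] V) x) ∧
      (∀ g : S, HasSquareSpinorNorm B (g : V ≃ₗ[ZMod p] V) ↔
        HasSquareSpinorNorm (LinearMap.BilinForm.restrict B U) (e g : U ≃ₗ[ZMod p] U)) := by
  classical
  have htwo : (2 : ZMod p) ≠ 0 := by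
    intro h
    have h2' : ((2 : ℕ) : ZMod p) = 0 := by exact_mod_cast h
    have hdvd := (ZMod.natCast_eq_zero_iff 2 p).mp h2'
    exact hodd ((Nat.prime_dvd_prime_iff_eq hp.out Nat.prime_two).mp hdvd)
  have hU : ∀ x, x ∈ U ↔ B x v = 0 := by
    intro x
    constructor
    · exact fun hx => horth x hx
    · intro hx
      have hx2 : x ∈ U ⊔ Submodule.span (ZMod p) {v} := hsup ▸ Submodule.mem_top
      obtain ⟨u, hu, w, hw, rfl⟩ := Submodule.mem_sup.mp hx2
      obtain ⟨c, rfl⟩ := Submodule.mem_span_singleton.mp hw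
      have hc : B (u + c • v) v = c * B v v := by
        rw [map_add, LinearMap.add_apply, horth u hu, map_smul, LinearMap.smul_apply,
          smul_eq_mul, zero_add]
      rw [hc] at hx
      rcases mul_eq_zero.mp hx with h | h
      · rw [h, zero_smul, add_zero]
        exact hu
      · exact absurd h hv
  set B' := LinearMap.BilinForm.restrict B U with hB'
  have hB'app : ∀ x y : U, B' x y = B (x : V) (y : V) := fun x y => rfl
  have hsymm' : ∀ x y : ↥U, B' x y = B' y x := fun x y => hsymm _ _
  have hnd' : ∀ x : ↥U, (∀ y : ↥U, B' x y = 0) → x = 0 := by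
    intro x hx
    have hxV : ∀ y : V, B (x : V) y = 0 := by
      intro y
      rw [SpinorAux.B_decomp B v U hv hU hsymm (x : V) y, SpinorAux.prjL_coe,
        SpinorAux.coe_B_v B v U hU x]
      have hx' := hx (SpinorAux.prjL B v U hv hU y)
      rw [hB'app] at hx'
      rw [hx']
      ring
    exact Subtype.ext (hnd _ hxV)
  let e : S ≃* OU := {
    toFun := fun g => ⟨SpinorAux.resE B v U hU ↑g ((hS _).1 g.2).1 ((hS _).1 g.2).2,
      (hOU _).2 fun x y => by
        rw [SpinorAux.resE_coe, SpinorAux.resE_coe, ((hS _).1 g.2).1]⟩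
    invFun := fun h => ⟨SpinorAux.extE B v U hv hU ↑h, (hS _).2
      ⟨SpinorAux.extE_isometry B v U hv hU hsymm ↑h ((hOU _).1 h.2),
        SpinorAux.extE_v B v U hv hU ↑h⟩⟩
    left_inv := fun g => Subtype.ext (SpinorAux.extE_resE B v U hv hU ↑g
      ((hS _).1 g.2).1 ((hS _).1 g.2).2)
    right_inv := fun h => Subtype.ext (LinearEquiv.ext fun u => Subtype.ext (by
      rw [show ((SpinorAux.resE B v U hU (SpinorAux.extE B v U hv hU ↑h) _ _) u : V)
          = SpinorAux.extE B v U hv hU ↑h (u : V) from rfl,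
        SpinorAux.extE_coe]))
    map_mul' := fun g₁ g₂ => Subtype.ext (LinearEquiv.ext fun u => Subtype.ext rfl) }
  refine ⟨e, fun g x => rfl, ?_⟩
  intro g
  have hg1 := ((hS _).1 g.2).1
  have hg2 := ((hS _).1 g.2).2
  have hcoe : (e g : U ≃ₗ[ZMod p] U) = SpinorAux.resE B v U hU ↑g hg1 hg2 := rfl
  have hlift : ∀ Lb : List ↥U,
      (e g : U ≃ₗ[ZMod p] U) = (Lb.map (SpinorAux.bRefl B')).prod →
      (g : V ≃ₗ[ZMod p] V)
        = ((Lb.map (fun u : ↥U => (u : V))).map (SpinorAux.bRefl B)).prod := by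
    intro Lb hLb
    rw [← SpinorAux.extE_resE B v U hv hU ↑g hg1 hg2, ← hcoe, hLb,
      SpinorAux.extE_bReflList B v U hv hU hsymm Lb]
  rw [SpinorAux2.hssn_iff, SpinorAux2.hssn_iff]
  constructor
  · rintro ⟨La, hLa1, hLa2, hLa3⟩
    obtain ⟨Lb, hLb1, hLb2⟩ := SpinorAux.cartanDieudonne htwo (Module.finrank (ZMod p) ↥U)
      ↥U B' hsymm' hnd' le_rfl (e g : U ≃ₗ[ZMod p] U) (fun x y => (hOU _).1 (e g).2 x y)
    refine ⟨Lb, hLb1, hLb2, ?_⟩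
    have hgb := hlift Lb hLb2
    have hcomb : ((((Lb.map (fun u : ↥U => (u : V))).reverse ++ La)).map
        (SpinorAux.bRefl B)).prod = 1 := by
      rw [List.map_append, List.prod_append, ← SpinorAux2.prod_bRefl_inv, ← hgb, ← hLa2,
        inv_mul_cancel]
    have hmem1 : ∀ a ∈ (Lb.map (fun u : ↥U => (u : V))).reverse ++ La, B a a ≠ 0 := by
      intro a ha
      rcases List.mem_append.mp ha with h | h
      · obtain ⟨u, hu, rfl⟩ := List.mem_map.mp (List.mem_reverse.mp h)
        exact hLb1 u hu
      · exact hLa1 a h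
    have hsq := SpinorAux.spinor_norm_wd B htwo hsymm hnd _ hmem1 hcomb
    rw [List.map_append, List.prod_append, List.map_reverse, List.prod_reverse] at hsq
    have hmapmap : ((Lb.map (fun u : ↥U => (u : V))).map (fun a => B a a)).prod
        = (Lb.map (fun a => B' a a)).prod := by
      rw [List.map_map]
      rfl
    rw [hmapmap] at hsq
    obtain ⟨s, hs⟩ := hLa3
    obtain ⟨t, ht⟩ := hsq
    have hQane : (La.map fun a => B a a).prod ≠ 0 := by
      rw [Ne, List.prod_eq_zero_iff]
      intro hx
      obtain ⟨aa, haa, h0⟩ := List.mem_map.mp hx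
      exact hLa1 aa haa h0
    have hsne : s ≠ 0 := by
      rintro rfl
      rw [mul_zero] at hs
      exact hQane hs
    rw [hs] at ht
    exact ⟨t / s, by
      rw [div_mul_div_comm, eq_div_iff (mul_ne_zero hsne hsne)]
      exact ht⟩
  · rintro ⟨Lb, h1, h2, h3⟩
    refine ⟨Lb.map (fun u : ↥U => (u : V)), ?_, hlift Lb h2, ?_⟩
    · intro a ha
      obtain ⟨u, hu, rfl⟩ := List.mem_map.mp ha
      exact h1 u hu
    · rw [show ((Lb.map (fun u : ↥U => (u : V))).map (fun a => B a a)).prod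
          = (Lb.map (fun a => B' a a)).prod from by rw [List.map_map]; rfl]
      exact h3
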